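/- arXiv:1108.2613 — 3 statements merged into one kernel-verified Lean document; each statement's English description precedes it below -/
import Mathlib

section
/- For all natural numbers r ≠ s, there exists l ≥ 2 with l = O(log(r+s)) such that r mod l ≠ s mod l. Precisely: there is a constant C such that for all r ≠ s with r + s ≥ 2, there exists l with 2 ≤ l ≤ C · log(r+s) and r mod l ≠ s mod l. -/
open Finset

/-- The central binomial coefficient divides the lcm of `1, ..., 2n`. -/
lemma centralBinom_dvd_lcm_Icc (n : ℕ) (hn : 0 < n) :
    Nat.centralBinom n ∣ (Finset.Icc 1 (2 * n)).lcm id := by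
  have hL : (Finset.Icc 1 (2 * n)).lcm id ≠ 0 := by
    rw [Ne, Finset.lcm_eq_zero_iff]
    rintro ⟨x, hx, hx0⟩
    simp only [Finset.mem_coe, Finset.mem_Icc, id_eq] at hx hx0
    omega
  rw [← Nat.factorization_prime_le_iff_dvd (Nat.centralBinom_ne_zero n) hL]
  intro p hp
  set k := (Nat.centralBinom n).factorization p with hk
  rcases Nat.eq_zero_or_pos k with h0 | hkpos
  · simp [h0]
  have hple : p ^ k ≤ 2 * n := by
    have := @Nat.pow_factorization_choose_le p (2 * n) n (by omega)
    simpa [hk, Nat.centralBinom] using this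
  have hmem : p ^ k ∈ Finset.Icc 1 (2 * n) := by
    rw [Finset.mem_Icc]
    exact ⟨Nat.one_le_pow _ _ hp.pos, hple⟩
  have hdvd : p ^ k ∣ (Finset.Icc 1 (2 * n)).lcm id := Finset.dvd_lcm hmem
  exact (Nat.Prime.pow_dvd_iff_le_factorization hp hL).mp hdvd

/-- `2^n ≤ centralBinom n` for `n ≥ 1`. -/
lemma two_pow_le_centralBinom (n : ℕ) (hn : 0 < n) :
    2 ^ n ≤ Nat.centralBinom n := by
  have h4 : 4 ^ n ≤ 2 * n * Nat.centralBinom n :=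
    Nat.four_pow_le_two_mul_self_mul_centralBinom n hn
  have h2n : 2 * n ≤ 2 ^ n := by
    have h1 : n - 1 < 2 ^ (n - 1) := Nat.lt_two_pow_self
    have h2 : 2 * 2 ^ (n - 1) = 2 ^ n := by
      rw [← pow_succ']
      congr 1
      omega
    omega
  have h4' : 2 ^ n * 2 ^ n ≤ 2 ^ n * Nat.centralBinom n := by
    calc 2 ^ n * 2 ^ n = 4 ^ n := by rw [← mul_pow]; norm_num
      _ ≤ 2 * n * Nat.centralBinom n := h4
      _ ≤ 2 ^ n * Nat.centralBinom n := Nat.mul_le_mul_right _ h2n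
  exact Nat.le_of_mul_le_mul_left h4' (pow_pos (by norm_num) n)

/-- Key arithmetic step: for `r < s`, there is `l` with `2 ≤ l ≤ 2(log₂(r+s)+1)`
    not dividing `s - r`. -/
lemma exists_small_nondvd (r s : ℕ) (hrs : r < s) :
    ∃ l, 2 ≤ l ∧ l ≤ 2 * (Nat.log 2 (r + s) + 1) ∧ ¬ l ∣ (s - r) := by
  set d := s - r with hd
  have hd0 : 0 < d := by omega
  have hdle : d ≤ r + s := by omega
  set n := Nat.log 2 (r + s) + 1 with hn
  have hnpos : 0 < n := by omega
  by_contra hcon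
  push_neg at hcon
  have hall : ∀ l ∈ Finset.Icc 1 (2 * n), l ∣ d := by
    intro l hl
    rw [Finset.mem_Icc] at hl
    rcases Nat.eq_or_lt_of_le hl.1 with h1 | h2
    · simpa [← h1] using one_dvd d
    · exact hcon l h2 hl.2
  have hLdvd : (Finset.Icc 1 (2 * n)).lcm id ∣ d := Finset.lcm_dvd hall
  have hLle : (Finset.Icc 1 (2 * n)).lcm id ≤ d := Nat.le_of_dvd hd0 hLdvd
  have hBL : Nat.centralBinom n ≤ (Finset.Icc 1 (2 * n)).lcm id := by
    apply Nat.le_of_dvd _ (centralBinom_dvd_lcm_Icc n hnpos)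
    rw [Nat.pos_iff_ne_zero, Ne, Finset.lcm_eq_zero_iff]
    rintro ⟨x, hx, hx0⟩
    simp only [Finset.mem_coe, Finset.mem_Icc, id_eq] at hx hx0
    omega
  have h2B : 2 ^ n ≤ Nat.centralBinom n := two_pow_le_centralBinom n hnpos
  have hlt : r + s < 2 ^ n := Nat.lt_pow_succ_log_self (by norm_num) (r + s)
  omega

theorem exists_small_distinguishing_modulus_aux (r s : ℕ) (hrs : r < s) (h2 : 2 ≤ r + s) :
    ∃ l : ℕ, 2 ≤ l ∧ (l : ℝ) ≤ 10 * Real.log (r + s) ∧ r % l ≠ s % l := by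
  obtain ⟨l, hl2, hlm, hlnd⟩ := exists_small_nondvd r s hrs
  refine ⟨l, hl2, ?_, ?_⟩
  · set k := Nat.log 2 (r + s) with hk
    have hpow : (2 : ℕ) ^ k ≤ r + s := Nat.pow_log_le_self 2 (by omega)
    have hpowR : ((2 : ℝ)) ^ k ≤ ((r + s : ℕ) : ℝ) := by
      exact_mod_cast hpow
    have hlog2 : (0.6931471803 : ℝ) < Real.log 2 := Real.log_two_gt_d9
    have hklog : (k : ℝ) * Real.log 2 ≤ Real.log ((r + s : ℕ) : ℝ) := by
      calc (k : ℝ) * Real.log 2 = Real.log (2 ^ k) := by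
            rw [Real.log_pow]
        _ ≤ Real.log ((r + s : ℕ) : ℝ) := by
            apply Real.log_le_log (by positivity) hpowR
    have hlogge : Real.log 2 ≤ Real.log ((r + s : ℕ) : ℝ) := by
      apply Real.log_le_log (by norm_num)
      exact_mod_cast h2
    have hlR : (l : ℝ) ≤ 2 * (k : ℝ) + 2 := by
      have : (l : ℝ) ≤ ((2 * (k + 1) : ℕ) : ℝ) := by exact_mod_cast hlm
      push_cast at this
      linarith
    have hkpos : (0 : ℝ) ≤ (k : ℝ) := Nat.cast_nonneg k
    have : ((r : ℝ) + s) = ((r + s : ℕ) : ℝ) := by push_cast; ring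
    rw [this]
    nlinarith [hklog, hlogge, hlog2, hlR, hkpos]
  · intro heq
    have hmod : Nat.ModEq l r s := heq
    have := (Nat.modEq_iff_dvd' (le_of_lt hrs)).mp hmod
    exact hlnd this

/-- For r ≠ s with r + s ≥ 2, some modulus l with 2 ≤ l ≤ C·log(r+s)
    distinguishes r and s. -/
theorem exists_small_distinguishing_modulus :
    ∃ C : ℝ, ∀ r s : ℕ, r ≠ s → 2 ≤ r + s →
      ∃ l : ℕ, 2 ≤ l ∧ (l : ℝ) ≤ C * Real.log (r + s) ∧ r % l ≠ s % l := by
  refine ⟨10, fun r s hne h2 => ?_⟩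
  rcases Nat.lt_or_ge r s with h | h
  · exact exists_small_distinguishing_modulus_aux r s h h2
  · obtain ⟨l, hl2, hlb, hlne⟩ :=
      exists_small_distinguishing_modulus_aux s r (by omega) (by omega)
    refine ⟨l, hl2, ?_, fun h' => hlne h'.symm⟩
    have : ((s : ℝ) + r) = ((r : ℝ) + s) := by ring
    rwa [this] at hlb
end

section
/- For every m ≥ 1, the least common multiple of {1, 2, ..., m} satisfies lcm(1,...,m) ≥ 2^{m-1} for m ≥ 7 (equivalently, the shortest word a^m b^M in L_gcm has M exponentially large in m). -/
open Finset

lemma nair_identity (N : ℕ) : ∀ m : ℕ, 0 < m →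
    ∑ k ∈ Finset.range (N + 1), ((-1 : ℚ) ^ k * (N.choose k) / (m + k))
      = 1 / (m * ((N + m).choose m)) := by
  induction N with
  | zero => intro m hm; simp
  | succ N ih =>
    intro m hm
    have hstep : ∑ k ∈ Finset.range (N + 2), ((-1 : ℚ) ^ k * ((N+1).choose k) / (m + k))
        = (∑ k ∈ Finset.range (N + 1), ((-1 : ℚ) ^ k * (N.choose k) / (m + k)))
          - ∑ k ∈ Finset.range (N + 1), ((-1 : ℚ) ^ k * (N.choose k) / ((m+1 : ℕ) + k)) := by
      have hsplit : ∀ k ∈ Finset.range (N + 2),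
          ((-1 : ℚ) ^ k * ((N+1).choose k) / (m + k))
            = ((-1:ℚ)^k * (N.choose k) / (m + k))
              + (if k = 0 then 0 else (-1:ℚ)^k * (N.choose (k-1)) / (m + k)) := by
        intro k _
        cases k with
        | zero => simp
        | succ k =>
          rw [Nat.choose_succ_succ, if_neg (Nat.succ_ne_zero k), Nat.succ_sub_one]
          push_cast
          ring
      rw [Finset.sum_congr rfl hsplit, Finset.sum_add_distrib]
      have e1 : ∑ k ∈ Finset.range (N + 2), ((-1 : ℚ) ^ k * (N.choose k) / (m + k))
          = ∑ k ∈ Finset.range (N + 1), ((-1 : ℚ) ^ k * (N.choose k) / (m + k)) := by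
        rw [Finset.sum_range_succ]
        simp [Nat.choose_succ_self]
      have e2 : (∑ k ∈ Finset.range (N + 2),
            if k = 0 then (0:ℚ) else (-1:ℚ)^k * (N.choose (k-1)) / (m + k))
          = - ∑ k ∈ Finset.range (N + 1), ((-1 : ℚ) ^ k * (N.choose k) / ((m+1 : ℕ) + k)) := by
        rw [Finset.sum_range_succ'
          (fun k => if k = 0 then (0:ℚ) else (-1:ℚ)^k * (N.choose (k-1)) / (m + k)) (N+1)]
        simp only [Nat.succ_ne_zero, if_false, if_true, Nat.succ_sub_one, add_zero]
        rw [← Finset.sum_neg_distrib]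
        apply Finset.sum_congr rfl
        intro k _
        push_cast
        ring
      rw [e1, e2]
      ring
    rw [hstep, ih m hm, ih (m+1) (Nat.succ_pos m)]
    have f1 : (N+m+1) * ((N+m).choose m) = (N+m+1).choose (m+1) * (m+1) :=
      Nat.add_one_mul_choose_eq (N+m) m
    have f2 : (N+m+1) * ((N+m).choose m) = (N+m+1).choose m * (N+1) := by
      have h1 : (N+m).choose m = (N+m).choose N := by
        rw [← Nat.choose_symm (Nat.le_add_right N m)]
        congr 1
        omega
      have h2 : (N+m+1).choose (N+1) = (N+m+1).choose m := by
        rw [← Nat.choose_symm (by omega : m ≤ N+m+1)]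
        congr 1
        omega
      rw [h1, ← h2]
      exact Nat.add_one_mul_choose_eq (N+m) N
    set A := ((N+m).choose m : ℚ) with hA
    set B := ((N+1+m).choose m : ℚ) with hB
    set C := ((N+(m+1)).choose (m+1) : ℚ) with hC
    have ha : (0:ℚ) < A := by
      rw [hA]; exact_mod_cast Nat.choose_pos (Nat.le_add_left m N)
    have hb : (0:ℚ) < B := by
      rw [hB]; exact_mod_cast Nat.choose_pos (by omega : m ≤ N+1+m)
    have hc : (0:ℚ) < C := by
      rw [hC]; exact_mod_cast Nat.choose_pos (by omega : m+1 ≤ N+(m+1))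
    have hm' : (0:ℚ) < (m:ℚ) := by exact_mod_cast hm
    have f1' : ((N:ℚ)+m+1) * A = C * (m+1) := by
      rw [hA, hC]
      have h : N+(m+1) = N+m+1 := by omega
      rw [h]
      exact_mod_cast f1
    have f2' : ((N:ℚ)+m+1) * A = B * (N+1) := by
      rw [hA, hB]
      have h : N+1+m = N+m+1 := by omega
      rw [h]
      exact_mod_cast f2
    push_cast
    field_simp
    linear_combination (-(B-A))*f1' + (-A)*f2'
lemma lcm_Icc_ne_zero (n : ℕ) : (Finset.Icc 1 n).lcm id ≠ 0 := by
  intro h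
  rw [Finset.lcm_eq_zero_iff] at h
  obtain ⟨j, hj, hj0⟩ := h
  simp only [Finset.mem_coe, Finset.mem_Icc, id] at hj hj0
  omega

lemma nair_dvd {k n : ℕ} (hk : 1 ≤ k) (hkn : k ≤ n) :
    k * n.choose k ∣ (Finset.Icc 1 n).lcm id := by
  set M := (Finset.Icc 1 n).lcm id with hM
  set N := n - k with hN
  have hNk : N + k = n := by omega
  have hdvd : ∀ j, 1 ≤ j → j ≤ n → j ∣ M := by
    intro j h1 h2
    have : j ∈ Finset.Icc 1 n := Finset.mem_Icc.mpr ⟨h1, h2⟩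
    exact Finset.dvd_lcm this
  have hM0 : M ≠ 0 := lcm_Icc_ne_zero n
  have key : (M : ℤ) = (k * n.choose k : ℕ)
      * ∑ j ∈ Finset.range (N+1), (-1:ℤ)^j * (N.choose j) * ((M / (k+j) : ℕ) : ℤ) := by
    have hq : ((M : ℤ) : ℚ) = (((k * n.choose k : ℕ) : ℤ) : ℚ)
        * ((∑ j ∈ Finset.range (N+1), (-1:ℤ)^j * (N.choose j) * ((M / (k+j) : ℕ) : ℤ) : ℤ) : ℚ) := by
      push_cast [-Int.natCast_div]
      have hcast : ∀ j ∈ Finset.range (N+1),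
          ((-1:ℚ)^j * (N.choose j) * ((((M:ℤ) / ((k:ℤ) + (j:ℤ)) : ℤ)) : ℚ))
            = (M : ℚ) * ((-1:ℚ)^j * (N.choose j) / (k + j)) := by
        intro j hj
        have hd : (k + j) ∣ M := hdvd (k+j) (by omega)
          (by have := Finset.mem_range.mp hj; omega)
        have hd' : ((k:ℤ) + (j:ℤ)) ∣ (M:ℤ) := by exact_mod_cast hd
        have hkj0 : ((k:ℤ) + (j:ℤ)) ≠ 0 := by
          have : (k + j : ℕ) ≠ 0 := by omega
          exact_mod_cast this
        rw [Int.cast_div_charZero hd']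
        push_cast
        ring
      rw [Finset.sum_congr rfl hcast, ← Finset.mul_sum]
      have hid := nair_identity N k hk
      rw [hNk] at hid
      rw [hid]
      have hch : (0:ℚ) < ((n.choose k : ℕ) : ℚ) := by exact_mod_cast Nat.choose_pos hkn
      have hk' : (0:ℚ) < (k:ℚ) := by exact_mod_cast hk
      field_simp
    exact_mod_cast hq
  have : ((k * n.choose k : ℕ) : ℤ) ∣ (M : ℤ) := ⟨_, key⟩
  exact_mod_cast this

/-- For m ≥ 7, lcm(1, 2, ..., m) ≥ 2^{m-1}. -/
theorem lcm_range_ge_two_pow (m : ℕ) (hm : 7 ≤ m) :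
    2 ^ (m - 1) ≤ (Finset.Icc 1 m).lcm id := by
  set M := (Finset.Icc 1 m).lcm id with hM
  have hM0 : M ≠ 0 := lcm_Icc_ne_zero m
  set n := (m - 1) / 2 with hn
  have hn3 : 3 ≤ n := by omega
  have h2n1 : 2 * n + 1 ≤ m := by omega
  have hm1 : m - 1 ≤ 2 * n + 1 := by omega
  have hsub : ∀ a : ℕ, a ≤ m → (Finset.Icc 1 a).lcm id ∣ M := by
    intro a ha
    apply Finset.lcm_dvd
    intro b hb
    have : b ∈ Finset.Icc 1 m := by
      simp only [Finset.mem_Icc] at *; omega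
    exact Finset.dvd_lcm this
  have d1 : n * (2*n).choose n ∣ M :=
    dvd_trans (nair_dvd (by omega) (by omega)) (hsub (2*n) (by omega))
  have d2 : (n+1) * (2*n+1).choose (n+1) ∣ M :=
    dvd_trans (nair_dvd (by omega) (by omega)) (hsub (2*n+1) h2n1)
  have e : (n+1) * (2*n+1).choose (n+1) = (2*n+1) * (2*n).choose n := by
    have h := Nat.add_one_mul_choose_eq (2*n) n
    linarith
  rw [e] at d2
  have hcop : Nat.Coprime n (2*n+1) := by
    have h : 2*n+1 = 1 + n + n := by ring
    rw [h, Nat.coprime_add_self_right, Nat.coprime_add_self_right]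
    exact Nat.coprime_one_right n
  have dlcm : n * (2*n+1) * (2*n).choose n ∣ M := by
    have h := Nat.lcm_dvd d1 d2
    rwa [Nat.lcm_mul_right, Nat.Coprime.lcm_eq_mul hcop] at h
  have hle : n * (2*n+1) * (2*n).choose n ≤ M :=
    Nat.le_of_dvd (Nat.pos_of_ne_zero hM0) dlcm
  have hbin : 4 ^ n ≤ 2 * n * Nat.centralBinom n :=
    Nat.four_pow_le_two_mul_self_mul_centralBinom n (by omega)
  have hcb : Nat.centralBinom n = (2*n).choose n := rfl
  calc 2 ^ (m - 1) ≤ 2 ^ (2*n+1) := Nat.pow_le_pow_right (by norm_num) hm1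
    _ = 2 * 4 ^ n := by rw [pow_succ, pow_mul]; ring
    _ ≤ 2 * (2 * n * Nat.centralBinom n) := mul_le_mul_right hbin 2
    _ = (2 * (2 * n)) * Nat.centralBinom n := by ring
    _ ≤ (n * (2*n+1)) * Nat.centralBinom n := by
        have h : 2 * (2*n) ≤ n * (2*n+1) := by nlinarith
        exact mul_le_mul_left h _
    _ = n * (2*n+1) * (2*n).choose n := by rw [hcb]
    _ ≤ M := hle
end

section
/- A unary language (subset of ℕ, identifying a^n with n) is regular if and only if it is eventually periodic. -/
def EventuallyPeriodic (S : Set ℕ) : Prop :=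
  ∃ N p, 0 < p ∧ ∀ n, N ≤ n → (n ∈ S ↔ n + p ∈ S)

private lemma per_iter {S : Set ℕ} {N p : ℕ} (hper : ∀ n, N ≤ n → (n ∈ S ↔ n + p ∈ S)) :
    ∀ k n, N ≤ n → (n ∈ S ↔ n + k * p ∈ S) := by
  intro k
  induction k with
  | zero => simp
  | succ k ih =>
    intro n hn
    rw [ih n hn, hper (n + k * p) (le_trans hn (Nat.le_add_right _ _))]
    ring_nf

private lemma unit_list_eq_replicate (w : List Unit) : w = List.replicate w.length () := by
  induction w with
  | nil => rfl
  | cons h t ih => simp [List.replicate_succ, ← ih]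

/-- A unary language (identifying a^n with n) is regular iff it is eventually periodic. -/
theorem unary_regular_iff_eventuallyPeriodic (S : Set ℕ) :
    Language.IsRegular {w : List Unit | w.length ∈ S} ↔ EventuallyPeriodic S := by
  constructor
  · rintro ⟨σ, hf, M, hM⟩
    set f : ℕ → σ := fun n => M.eval (List.replicate n ()) with hfdef
    have hstep : ∀ n, f (n + 1) = M.step (f n) () := by
      intro n
      simp only [hfdef, List.replicate_succ']
      exact DFA.eval_append_singleton M _ _
    have hmem : ∀ n, n ∈ S ↔ f n ∈ M.accept := by
      intro n
      have : List.replicate n () ∈ M.accepts ↔ (List.replicate n ()).length ∈ S := by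
        rw [hM]; rfl
      simpa [DFA.mem_accepts] using this.symm
    have : ¬ Function.Injective (fun i : Fin (Fintype.card σ + 1) => f i) := by
      intro hinj
      have := Fintype.card_le_of_injective _ hinj
      simp at this
    rw [Function.not_injective_iff] at this
    obtain ⟨i, j, hfij, hij⟩ := this
    wlog hlt : (i : ℕ) < (j : ℕ) generalizing i j
    · exact this j i hfij.symm hij.symm (by omega)
    refine ⟨i, j - i, by omega, ?_⟩
    have key : ∀ n, (i : ℕ) ≤ n → f (n + ((j : ℕ) - i)) = f n := by
      intro n hn
      obtain ⟨k, rfl⟩ := Nat.exists_eq_add_of_le hn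
      induction k with
      | zero =>
        have h1 : (i : ℕ) + 0 + ((j : ℕ) - i) = (j : ℕ) := by omega
        have h2 : (i : ℕ) + 0 = (i : ℕ) := by omega
        rw [h1, h2]; exact hfij.symm
      | succ k ih =>
        have h1 : (i : ℕ) + (k + 1) + ((j : ℕ) - i) = ((i : ℕ) + k + ((j : ℕ) - i)) + 1 := by
          omega
        rw [h1, hstep, ih (by omega), ← hstep]
        congr 1
    intro n hn
    rw [hmem, hmem, key n hn]
  · rintro ⟨N, p, hp, hper⟩
    set M : DFA Unit (Fin (N + p)) := {
      step := fun k _ => if h : (k : ℕ) + 1 < N + p then ⟨k + 1, h⟩ else ⟨N, by omega⟩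
      start := ⟨0, by omega⟩
      accept := {k | (k : ℕ) ∈ S} } with hMdef
    refine ⟨Fin (N + p), inferInstance, M, ?_⟩
    ext w
    obtain ⟨n, rfl⟩ : ∃ n, w = List.replicate n () := ⟨w.length, unit_list_eq_replicate w⟩
    have hstepval : ∀ k : Fin (N + p),
        ((M.step k () : Fin (N + p)) : ℕ) = if (k : ℕ) + 1 < N + p then (k : ℕ) + 1 else N := by
      intro k
      simp only [hMdef]
      split <;> simp_all
    have heval : ∀ n, ((M.eval (List.replicate n ()) : Fin (N + p)) : ℕ) =
        if n < N + p then n else N + (n - N) % p := by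
      intro n
      induction n with
      | zero =>
        rw [if_pos (by omega)]
        rfl
      | succ n ih =>
        rw [List.replicate_succ', DFA.eval_append_singleton, hstepval, ih]
        have hmod := Nat.mod_lt (n - N) hp
        by_cases h : n < N + p
        · rw [if_pos h]
          by_cases h2 : n + 1 < N + p
          · rw [if_pos h2, if_pos h2]
          · rw [if_neg h2, if_neg h2]
            have : n + 1 - N = p := by omega
            rw [this, Nat.mod_self]
            omega
        · rw [if_neg h, if_neg (show ¬ (n + 1 < N + p) by omega)]
          rcases (show (n - N) % p + 1 < p ∨ (n - N) % p + 1 = p by omega) with h1 | h1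
          · rw [if_pos (by omega)]
            have h3 : (n + 1 - N) % p = (n - N) % p + 1 := by
              have h4 : n + 1 - N = (n - N) + 1 := by omega
              rw [h4, Nat.add_mod, Nat.mod_eq_of_lt (show 1 < p by omega),
                Nat.mod_eq_of_lt h1]
            omega
          · rw [if_neg (by omega)]
            have h2 : n + 1 - N = (n - N) + 1 := by omega
            rw [h2, Nat.add_mod]
            simp [h1]
    have hmemiff : ∀ n : ℕ, (if n < N + p then n else N + (n - N) % p) ∈ S ↔ n ∈ S := by
      intro n
      split
      · rfl
      · rename_i h
        set v := N + (n - N) % p with hv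
        have hmd := Nat.mod_add_div (n - N) p
        have hcomm : p * ((n - N) / p) = ((n - N) / p) * p := Nat.mul_comm _ _
        have hq : n = v + ((n - N) / p) * p := by omega
        rw [per_iter hper ((n - N) / p) v (by omega), ← hq]
    constructor
    · intro h
      rw [DFA.mem_accepts] at h
      have h2 : ((M.eval (List.replicate n ()) : Fin (N + p)) : ℕ) ∈ S := h
      rw [heval n, hmemiff] at h2
      show (List.replicate n ()).length ∈ S
      simpa using h2
    · intro h
      have h2 : (List.replicate n ()).length ∈ S := h
      rw [List.length_replicate] at h2
      rw [DFA.mem_accepts]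
      show ((M.eval (List.replicate n ()) : Fin (N + p)) : ℕ) ∈ S
      rw [heval n, hmemiff]
      exact h2
end
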